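/- Let S ⊂ K^m and let f : S → K^n satisfy |f(x) − f(y)| ≤ C|x − y|^r for all x, y ∈ S, where 0 < C < ∞ and 0 < r ≤ 1. Then f has an extension g : K^m → K^n with g|_S = f and |g(x) − g(y)| ≤ C|x − y|^r for all x, y ∈ K^m (the same Hölder constant C and the same exponent r). -/

import Mathlib

open MeasureTheory Metric Set Filter Topology

private lemma pi_ultra {K : Type*} [NontriviallyNormedField K] [IsUltrametricDist K]
    {k : ℕ} (x y z : Fin k → K) : ‖x - z‖ ≤ max ‖x - y‖ ‖y - z‖ := by
  rw [← dist_eq_norm, ← dist_eq_norm, ← dist_eq_norm]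
  rw [dist_pi_le_iff (le_max_iff.2 (Or.inl dist_nonneg))]
  intro i
  exact (dist_triangle_max (x i) (y i) (z i)).trans
    (max_le_max (dist_le_pi_dist x y i) (dist_le_pi_dist y z i))

/-- Theorem 8, non-archimedean Kirszbraun-type extension.
If `S ⊆ K^m` and `f : S → K^n` is Hölder with constants `C` and `r`
(`0 < C < ∞`, `0 < r ≤ 1`), then `f` extends to a map `g : K^m → K^n` which is
Hölder on all of `K^m` with the same constants `C` and `r`. -/
theorem stmt1 {K : Type*} [NontriviallyNormedField K] [IsUltrametricDist K]
    [LocallyCompactSpace K] {m n : ℕ}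
    (S : Set (Fin m → K)) (f : (Fin m → K) → (Fin n → K))
    (C r : ℝ) (hC : 0 < C) (hr0 : 0 < r) (hr1 : r ≤ 1)
    (hf : ∀ x ∈ S, ∀ y ∈ S, ‖f x - f y‖ ≤ C * ‖x - y‖ ^ r) :
    ∃ g : (Fin m → K) → (Fin n → K),
      (∀ x ∈ S, g x = f x) ∧
      ∀ x y : Fin m → K, ‖g x - g y‖ ≤ C * ‖x - y‖ ^ r := by
  classical
  have : ProperSpace (Fin n → K) := ProperSpace.of_locallyCompactSpace K
  set d : (Fin m → K) → (Fin m → K) → ℝ := fun x y => C * ‖x - y‖ ^ r with hd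
  have hd_symm : ∀ x y, d x y = d y x := fun x y => by simp [hd, norm_sub_rev]
  have hd_self : ∀ x, d x x = 0 := fun x => by
    simp [hd, Real.zero_rpow hr0.ne']
  have hd_ultra : ∀ x y z, d x z ≤ max (d x y) (d y z) := by
    intro x y z
    have h1 : ‖x - z‖ ^ r ≤ (max ‖x - y‖ ‖y - z‖) ^ r :=
      Real.rpow_le_rpow (norm_nonneg _) (pi_ultra x y z) hr0.le
    have h2 : (max ‖x - y‖ ‖y - z‖) ^ r = max (‖x - y‖ ^ r) (‖y - z‖ ^ r) := by
      rcases le_total ‖x - y‖ ‖y - z‖ with h | h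
      · rw [max_eq_right h, max_eq_right (Real.rpow_le_rpow (norm_nonneg _) h hr0.le)]
      · rw [max_eq_left h, max_eq_left (Real.rpow_le_rpow (norm_nonneg _) h hr0.le)]
    calc d x z ≤ C * max (‖x - y‖ ^ r) (‖y - z‖ ^ r) := by
          rw [← h2]; exact mul_le_mul_of_nonneg_left (h2 ▸ h1) hC.le
      _ = max (d x y) (d y z) := by
          rcases le_total (‖x - y‖ ^ r) (‖y - z‖ ^ r) with h | h
          · rw [max_eq_right h, hd]
            simp only
            rw [max_eq_right (mul_le_mul_of_nonneg_left h hC.le)]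
          · rw [max_eq_left h, hd]
            simp only
            rw [max_eq_left (mul_le_mul_of_nonneg_left h hC.le)]
  -- the poset of partial extensions
  let α := {p : Set (Fin m → K) × ((Fin m → K) → (Fin n → K)) //
    S ⊆ p.1 ∧ (∀ x ∈ S, p.2 x = f x) ∧
    ∀ x ∈ p.1, ∀ y ∈ p.1, ‖p.2 x - p.2 y‖ ≤ d x y}
  let rel : α → α → Prop := fun p q => p.1.1 ⊆ q.1.1 ∧ ∀ x ∈ p.1.1, q.1.2 x = p.1.2 x
  have p0 : α := ⟨(S, f), subset_rfl, fun x _ => rfl, fun x hx y hy => hf x hx y hy⟩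
  have htrans : ∀ {a b c : α}, rel a b → rel b c → rel a c := by
    rintro a b c ⟨hab, hab'⟩ ⟨hbc, hbc'⟩
    exact ⟨hab.trans hbc, fun x hx => (hbc' x (hab hx)).trans (hab' x hx)⟩
  have hchains : ∀ c : Set α, IsChain rel c → ∃ ub, ∀ a ∈ c, rel a ub := by
    intro c hc
    rcases c.eq_empty_or_nonempty with rfl | ⟨q0, hq0⟩
    · exact ⟨p0, by simp⟩
    · set T : Set (Fin m → K) := {x | ∃ p ∈ c, x ∈ (p : α).1.1} with hT
      set g : (Fin m → K) → (Fin n → K) := fun x =>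
        if h : ∃ p ∈ c, x ∈ (p : α).1.1 then h.choose.1.2 x else f x with hg
      have hcons : ∀ p ∈ c, ∀ x ∈ (p : α).1.1, g x = p.1.2 x := by
        intro p hp x hx
        have hex : ∃ q ∈ c, x ∈ (q : α).1.1 := ⟨p, hp, hx⟩
        rw [hg]; simp only [dif_pos hex]
        obtain ⟨hqc, hxq⟩ := hex.choose_spec
        rcases eq_or_ne hex.choose p with h | h
        · rw [h]
        · rcases hc hqc hp h with h' | h'
          · exact (h'.2 x hxq).symm
          · exact h'.2 x hx
      refine ⟨⟨(T, g), ?_, ?_, ?_⟩, ?_⟩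
      · exact fun x hx => ⟨q0, hq0, q0.2.1 hx⟩
      · intro x hx
        show g x = f x
        rw [hcons q0 hq0 x (q0.2.1 hx)]
        exact q0.2.2.1 x hx
      · rintro x ⟨p, hp, hxp⟩ y ⟨q, hq, hyq⟩
        show ‖g x - g y‖ ≤ d x y
        rcases eq_or_ne p q with h | h
        · subst h
          rw [hcons p hp x hxp, hcons p hp y hyq]
          exact p.2.2.2 x hxp y hyq
        · rcases hc hp hq h with h' | h'
          · rw [hcons q hq x (h'.1 hxp), hcons q hq y hyq]
            exact q.2.2.2 x (h'.1 hxp) y hyq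
          · rw [hcons p hp x hxp, hcons p hp y (h'.1 hyq)]
            exact p.2.2.2 x hxp y (h'.1 hyq)
      · intro p hp
        exact ⟨fun x hx => ⟨p, hp, hx⟩, fun x hx => hcons p hp x hx⟩
  obtain ⟨M, hM⟩ := exists_maximal_of_chains_bounded hchains (fun {a b c} => htrans)
  -- the maximal element is defined on all of K^m
  have htot : ∀ x, x ∈ M.1.1 := by
    by_contra h
    push_neg at h
    obtain ⟨x, hx⟩ := h
    -- find a value v compatible with all constraints
    have hv : ∃ v : Fin n → K, ∀ t ∈ M.1.1, ‖v - M.1.2 t‖ ≤ d x t := by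
      rcases M.1.1.eq_empty_or_nonempty with hE | hNE
      · exact ⟨0, fun t ht => by rw [hE] at ht; exact absurd ht (notMem_empty t)⟩
      · have : Nonempty M.1.1 := hNE.to_subtype
        set B : M.1.1 → Set (Fin n → K) := fun t => closedBall (M.1.2 t) (d x t) with hB
        have hsub : ∀ s t : M.1.1, d x s ≤ d x t → B s ⊆ B t := by
          intro s t hst v hvs
          rw [hB, mem_closedBall, dist_eq_norm] at hvs ⊢
          have h1 : ‖M.1.2 s - M.1.2 t‖ ≤ d x t := by
            refine (M.2.2.2 s s.2 t t.2).trans ?_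
            refine (hd_ultra s x t).trans ?_
            rw [hd_symm s x]
            exact max_le hst le_rfl
          calc ‖v - M.1.2 t‖ ≤ max ‖v - M.1.2 s‖ ‖M.1.2 s - M.1.2 t‖ := pi_ultra _ _ _
            _ ≤ d x t := max_le (hvs.trans hst) h1
        have hdir : Directed (· ⊇ ·) B := by
          intro s t
          rcases le_total (d x s) (d x t) with h | h
          · exact ⟨s, subset_rfl, hsub s t h⟩
          · exact ⟨t, hsub t s h, subset_rfl⟩
        obtain ⟨v, hvmem⟩ := IsCompact.nonempty_iInter_of_directed_nonempty_isCompact_isClosed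
          B hdir (fun t => ⟨M.1.2 t, mem_closedBall_self (by positivity)⟩)
          (fun t => isCompact_closedBall _ _) (fun t => isClosed_closedBall)
        refine ⟨v, fun t ht => ?_⟩
        have := mem_iInter.1 hvmem ⟨t, ht⟩
        rwa [hB, mem_closedBall, dist_eq_norm] at this
    obtain ⟨v, hv⟩ := hv
    have hprop1 : S ⊆ insert x M.1.1 := M.2.1.trans (subset_insert _ _)
    have hprop2 : ∀ y ∈ S, Function.update M.1.2 x v y = f y := by
      intro y hy
      rw [Function.update_of_ne (fun h : y = x => hx (h ▸ M.2.1 hy)) _ _]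
      exact M.2.2.1 y hy
    have hprop3 : ∀ y ∈ insert x M.1.1, ∀ z ∈ insert x M.1.1,
        ‖Function.update M.1.2 x v y - Function.update M.1.2 x v z‖ ≤ d y z := by
      rintro y (rfl | hy) z (rfl | hz)
      · simp [hd_self]
      · rw [Function.update_self, Function.update_of_ne (fun h : z = y => hx (h ▸ hz))]
        exact hv z hz
      · rw [Function.update_of_ne (fun h : y = z => hx (h ▸ hy)), Function.update_self,
          norm_sub_rev, hd_symm]
        exact hv y hy
      · rw [Function.update_of_ne (fun h : y = x => hx (h ▸ hy)),
          Function.update_of_ne (fun h : z = x => hx (h ▸ hz))]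
        exact M.2.2.2 y hy z hz
    have hle : rel M ⟨(insert x M.1.1, Function.update M.1.2 x v), hprop1, hprop2, hprop3⟩ := by
      constructor
      · exact subset_insert _ _
      · intro y hy
        exact Function.update_of_ne (fun h : y = x => hx (h ▸ hy)) _ _
    exact hx ((hM _ hle).1 (mem_insert x _))
  exact ⟨M.1.2, M.2.2.1, fun x y => M.2.2.2 x (htot x) y (htot y)⟩
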